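/- Let G be a finite connected simple graph, S an affine subspace of edge valuations containing a valuation f with all weights positive, and E_{λ₁} the eigenspace of the smallest nonzero eigenvalue λ₁ of the weighted Laplacian Δ_f. Then f maximizes λ₁ over S if and only if for every nonzero infinitesimal variation Q in the tangent space of S, the quadratic form given by the induced variation Q_Δ of the Laplacian, restricted to E_{λ₁}, is indefinite (i.e. is neither positive definite nor negative definite on E_{λ₁}). -/

import Mathlib

open Matrix Finset
open scoped Classical

namespace ExtremalGraphs

variable {V : Type*} [Fintype V] [DecidableEq V] (G : SimpleGraph V) [DecidableRel G.Adj]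

/-- The elementary Laplacian `Q_e` of an edge `e`: entries `1` at the two diagonal
positions of its endpoints, `-1` at the two off-diagonal positions, `0` elsewhere. -/
def elemLap (e : G.edgeSet) : Matrix V V ℝ := fun v w =>
  if v = w then (if v ∈ (e : Sym2 V) then 1 else 0)
  else (if (e : Sym2 V) = s(v, w) then -1 else 0)

/-- The weighted Laplacian of the valuation `f` : `Δ_f = ∑_e f(e) • Q_e`. -/
noncomputable def wLap (f : G.edgeSet → ℝ) : Matrix V V ℝ :=
  ∑ e : G.edgeSet, f e • elemLap G e

/-- The smallest nonzero eigenvalue `λ₁(f)` of the weighted Laplacian, given by the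
Rayleigh–Ritz quotient over nonzero mean-zero vectors. -/
noncomputable def lambda1 (f : G.edgeSet → ℝ) : ℝ :=
  sInf {r | ∃ x : V → ℝ, x ≠ 0 ∧ (∑ v, x v) = 0 ∧
    r = (x ⬝ᵥ (wLap G f) *ᵥ x) / (x ⬝ᵥ x)}

/-- The eigenspace `E_{λ₁}` of `λ₁(f)` for the weighted Laplacian `Δ_f`. -/
noncomputable def EigOne (f : G.edgeSet → ℝ) : Set (V → ℝ) :=
  {x | (wLap G f) *ᵥ x = lambda1 G f • x}

/-! ### Auxiliary definitions -/

/-- The quadratic form of the weighted Laplacian. -/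
noncomputable def quad (g : G.edgeSet → ℝ) (x : V → ℝ) : ℝ := x ⬝ᵥ (wLap G g) *ᵥ x

/-- The difference vector of an ordered pair of vertices. -/
def dvec (a b : V) : V → ℝ := Pi.single a 1 - Pi.single b 1

/-- The compact set of unit mean-zero vectors. -/
def KS (V : Type*) [Fintype V] : Set (V → ℝ) := {x | (∑ v, x v) = 0 ∧ x ⬝ᵥ x = 1}

lemma edge_rep (e : G.edgeSet) : ∃ a b, G.Adj a b ∧ (e : Sym2 V) = s(a, b) := by
  obtain ⟨s, hs⟩ := e
  induction s using Sym2.ind with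
  | _ a b => exact ⟨a, b, hs, rfl⟩

lemma dvec_dot (a b : V) (x : V → ℝ) : dvec a b ⬝ᵥ x = x a - x b := by
  simp [dvec, sub_dotProduct, single_dotProduct]

lemma dvec_sum (a b : V) : (∑ v, dvec a b v) = 0 := by
  simp [dvec, Finset.sum_sub_distrib, Finset.sum_pi_single]

lemma elemLap_eq (a b : V) (hab : G.Adj a b) (e : G.edgeSet) (he : (e : Sym2 V) = s(a, b)) :
    elemLap G e = vecMulVec (dvec a b) (dvec a b) := by
  have hne : a ≠ b := hab.ne
  funext v w
  simp only [elemLap, he, vecMulVec_apply, dvec, Pi.sub_apply, Pi.single_apply,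
    Sym2.mem_iff, Sym2.eq_iff]
  by_cases h1 : v = a <;> by_cases h2 : v = b <;> by_cases h3 : w = a <;> by_cases h4 : w = b <;>
    by_cases h5 : v = w <;> simp_all [eq_comm] <;> ring

lemma dot_vecMulVec (u x : V → ℝ) : x ⬝ᵥ (vecMulVec u u) *ᵥ x = (u ⬝ᵥ x) ^ 2 := by
  simp only [dotProduct, mulVec, vecMulVec_apply, sq, Finset.sum_mul, Finset.mul_sum]
  exact Finset.sum_congr rfl fun v _ => Finset.sum_congr rfl fun w _ => by ring

/-- The square of the edge-difference, as a function on `Sym2 V`. -/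
def edSq (x : V → ℝ) : Sym2 V → ℝ := Sym2.lift ⟨fun a b => (x a - x b) ^ 2, by intros; ring⟩

lemma dot_sumMat {ι : Type*} (s : Finset ι) (M : ι → Matrix V V ℝ) (x y : V → ℝ) :
    x ⬝ᵥ (∑ i ∈ s, M i) *ᵥ y = ∑ i ∈ s, x ⬝ᵥ (M i) *ᵥ y := by
  induction s using Finset.cons_induction with
  | empty => simp
  | cons i s hi ih => rw [Finset.sum_cons, Finset.sum_cons, add_mulVec, dotProduct_add, ih]

lemma dot_smulMat (c : ℝ) (M : Matrix V V ℝ) (x y : V → ℝ) :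
    x ⬝ᵥ (c • M) *ᵥ y = c * (x ⬝ᵥ M *ᵥ y) := by
  simp [smul_mulVec, dotProduct_smul, smul_eq_mul]

lemma quad_eq_sum (g : G.edgeSet → ℝ) (x : V → ℝ) :
    quad G g x = ∑ e : G.edgeSet, g e * edSq x (e : Sym2 V) := by
  rw [quad, wLap, dot_sumMat]
  refine Finset.sum_congr rfl fun e _ => ?_
  obtain ⟨a, b, hab, he⟩ := edge_rep G e
  rw [dot_smulMat, elemLap_eq G a b hab e he, dot_vecMulVec, dvec_dot, he]
  rfl


/-! ### Linearity and symmetry -/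

lemma quad_add (g h : G.edgeSet → ℝ) (x : V → ℝ) :
    quad G (g + h) x = quad G g x + quad G h x := by
  simp [quad_eq_sum, Pi.add_apply, add_mul, Finset.sum_add_distrib]

lemma quad_smul (c : ℝ) (g : G.edgeSet → ℝ) (x : V → ℝ) :
    quad G (c • g) x = c * quad G g x := by
  simp [quad_eq_sum, Finset.mul_sum, mul_assoc]

lemma quad_neg (g : G.edgeSet → ℝ) (x : V → ℝ) : quad G (-g) x = -quad G g x := by
  simp [quad_eq_sum, Finset.sum_neg_distrib]

lemma quad_smul_vec (g : G.edgeSet → ℝ) (c : ℝ) (x : V → ℝ) :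
    quad G g (c • x) = c ^ 2 * quad G g x := by
  simp only [quad_eq_sum, Finset.mul_sum]
  refine Finset.sum_congr rfl fun e _ => ?_
  obtain ⟨a, b, hab, he⟩ := edge_rep G e
  rw [he]
  show g e * (c * x a - c * x b) ^ 2 = c ^ 2 * (g e * (x a - x b) ^ 2)
  ring

lemma quad_nonneg {g : G.edgeSet → ℝ} (hg : ∀ e, 0 ≤ g e) (x : V → ℝ) : 0 ≤ quad G g x := by
  rw [quad_eq_sum]
  refine Finset.sum_nonneg fun e _ => mul_nonneg (hg e) ?_
  obtain ⟨a, b, hab, he⟩ := edge_rep G e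
  rw [he]; exact sq_nonneg _

lemma walk_const {x : V → ℝ} (h : ∀ u v, G.Adj u v → x u = x v) {a b : V} (p : G.Walk a b) :
    x a = x b := by
  induction p with
  | nil => rfl
  | cons hadj _ ih => exact (h _ _ hadj).trans ih

lemma quad_pos (hG : G.Connected) {g : G.edgeSet → ℝ} (hg : ∀ e, 0 < g e) {x : V → ℝ}
    (hsum : (∑ v, x v) = 0) (hx : x ≠ 0) : 0 < quad G g x := by
  rcases (quad_nonneg G (fun e => (hg e).le) x).lt_or_eq with h | h
  · exact h
  exfalso
  rw [quad_eq_sum] at h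
  have hterm : ∀ e ∈ (Finset.univ : Finset G.edgeSet), g e * edSq x (e : Sym2 V) = 0 := by
    rw [← Finset.sum_eq_zero_iff_of_nonneg]
    · exact h.symm
    · intro e _
      refine mul_nonneg (hg e).le ?_
      obtain ⟨a, b, hab, he⟩ := edge_rep G e
      rw [he]; exact sq_nonneg _
  have hadjeq : ∀ u v, G.Adj u v → x u = x v := by
    intro u v huv
    have := hterm ⟨s(u, v), huv⟩ (Finset.mem_univ _)
    have h2 : edSq x (s(u, v)) = 0 := by
      rcases mul_eq_zero.mp this with h' | h'
      · exact absurd h' (hg _).ne'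
      · exact h'
    have h3 : (x u - x v) ^ 2 = 0 := h2
    have := pow_eq_zero_iff (n := 2) (by norm_num) |>.mp h3
    linarith [this]
  obtain ⟨v₀⟩ : Nonempty V := hG.nonempty
  have hconst : ∀ v, x v = x v₀ := fun v => (hG.preconnected v v₀).elim fun p => walk_const G hadjeq p
  have hx0 : x v₀ = 0 := by
    have heq : (∑ v, x v) = (Fintype.card V : ℝ) * x v₀ := by
      rw [Finset.sum_congr rfl fun v _ => hconst v]
      simp [Finset.card_univ, mul_comm]
    rw [heq] at hsum
    have hne : Nonempty V := ⟨v₀⟩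
    have hcard : (0 : ℝ) < (Fintype.card V : ℝ) := by exact_mod_cast Fintype.card_pos
    exact (mul_eq_zero.mp hsum).elim (fun h => absurd h hcard.ne') id
  exact hx (funext fun v => by rw [hconst v, hx0]; rfl)

lemma sum_mulVec_eq_zero (g : G.edgeSet → ℝ) (x : V → ℝ) :
    (∑ v, (wLap G g *ᵥ x) v) = 0 := by
  have hcol : ∀ e : G.edgeSet, ∀ w, (∑ v, elemLap G e v w) = 0 := by
    intro e w
    obtain ⟨a, b, hab, he⟩ := edge_rep G e
    rw [Finset.sum_congr rfl fun v _ => by rw [elemLap_eq G a b hab e he, vecMulVec_apply]]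
    rw [← Finset.sum_mul, dvec_sum, zero_mul]
  have : ∀ w, (∑ v, wLap G g v w) = 0 := by
    intro w
    rw [wLap]
    rw [Finset.sum_congr rfl fun v (_ : v ∈ Finset.univ) => show (∑ e : G.edgeSet, g e • elemLap G e) v w = ∑ e : G.edgeSet, g e * elemLap G e v w by simp [Matrix.sum_apply]]
    rw [Finset.sum_comm]
    simp [← Finset.mul_sum, hcol]
  calc (∑ v, (wLap G g *ᵥ x) v) = ∑ v, ∑ w, wLap G g v w * x w := rfl
    _ = ∑ w, ∑ v, wLap G g v w * x w := Finset.sum_comm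
    _ = ∑ w, (∑ v, wLap G g v w) * x w := by
        refine Finset.sum_congr rfl fun w _ => ?_
        rw [Finset.sum_mul]
    _ = 0 := by
        refine Finset.sum_eq_zero fun w _ => ?_
        rw [this w, zero_mul]

lemma wLap_symm (g : G.edgeSet → ℝ) : (wLap G g)ᵀ = wLap G g := by
  refine Matrix.ext fun v w => ?_
  simp only [wLap, Matrix.transpose_apply, Matrix.sum_apply, Matrix.smul_apply, smul_eq_mul]
  refine Finset.sum_congr rfl fun e _ => ?_
  obtain ⟨a, b, hab, he⟩ := edge_rep G e
  rw [elemLap_eq G a b hab e he]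
  simp only [vecMulVec_apply]
  ring

lemma dot_mulVec_comm (g : G.edgeSet → ℝ) (x y : V → ℝ) :
    x ⬝ᵥ (wLap G g) *ᵥ y = y ⬝ᵥ (wLap G g) *ᵥ x := by
  rw [Matrix.dotProduct_mulVec, ← Matrix.mulVec_transpose, wLap_symm, dotProduct_comm]

/-! ### Compactness of `KS` and continuity of `quad` -/

lemma continuous_quad (g : G.edgeSet → ℝ) : Continuous fun x : V → ℝ => quad G g x := by
  show Continuous fun x : V → ℝ => ∑ v, x v * ∑ w, wLap G g v w * x w
  exact continuous_finset_sum _ fun v _ => (continuous_apply v).mul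
    (continuous_finset_sum _ fun w _ => continuous_const.mul (continuous_apply w))

lemma continuous_dot : Continuous fun x : V → ℝ => x ⬝ᵥ x :=
  continuous_finset_sum _ fun v _ => (continuous_apply v).mul (continuous_apply v)

lemma isCompact_KS : IsCompact (KS V) := by
  have hclosed : IsClosed (KS V) := by
    have h1 : IsClosed {x : V → ℝ | (∑ v, x v) = 0} :=
      isClosed_eq (continuous_finset_sum _ fun v _ => continuous_apply v) continuous_const
    have h2 : IsClosed {x : V → ℝ | x ⬝ᵥ x = 1} := isClosed_eq continuous_dot continuous_const
    exact h1.inter h2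
  refine IsCompact.of_isClosed_subset (isCompact_univ_pi fun _ : V => isCompact_Icc
    (a := (-1 : ℝ)) (b := 1)) hclosed ?_
  intro x hx
  have hbound : ∀ v, (x v) ^ 2 ≤ 1 := by
    intro v
    have : (x v) ^ 2 ≤ ∑ w, (x w) ^ 2 :=
      Finset.single_le_sum (fun w _ => sq_nonneg (x w)) (Finset.mem_univ v)
    calc (x v) ^ 2 ≤ ∑ w, (x w) ^ 2 := this
      _ = x ⬝ᵥ x := by simp [dotProduct, sq]
      _ = 1 := hx.2
  intro v _
  have h := hbound v
  constructor <;> nlinarith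

lemma dot_self_pos {x : V → ℝ} (hx : x ≠ 0) : 0 < x ⬝ᵥ x := by
  have h0 : (0:ℝ) ≤ x ⬝ᵥ x := by
    simpa [dotProduct, ← sq] using Finset.sum_nonneg fun v (_ : v ∈ Finset.univ) => sq_nonneg (x v)
  rcases h0.lt_or_eq with h | h
  · exact h
  · exact absurd (dotProduct_self_eq_zero.mp h.symm) hx

lemma KS_ne_zero {x : V → ℝ} (hx : x ∈ KS V) : x ≠ 0 := by
  intro h
  rw [h] at hx
  simpa using hx.2

/-- The defining set of `lambda1` is the image of `KS` under `quad`. -/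
lemma lambda1_set_eq (g : G.edgeSet → ℝ) :
    {r | ∃ x : V → ℝ, x ≠ 0 ∧ (∑ v, x v) = 0 ∧
      r = (x ⬝ᵥ (wLap G g) *ᵥ x) / (x ⬝ᵥ x)} = quad G g '' KS V := by
  ext r
  constructor
  · rintro ⟨x, hx0, hsum, rfl⟩
    have hdot : 0 < x ⬝ᵥ x := dot_self_pos hx0
    set c : ℝ := (Real.sqrt (x ⬝ᵥ x))⁻¹ with hc
    have hs : Real.sqrt (x ⬝ᵥ x) > 0 := Real.sqrt_pos.mpr hdot
    have hc2 : c ^ 2 = (x ⬝ᵥ x)⁻¹ := by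
      rw [hc, ← Real.sqrt_inv]
      exact Real.sq_sqrt (by positivity)
    refine ⟨c • x, ⟨?_, ?_⟩, ?_⟩
    · show (∑ v, c * x v) = 0
      rw [← Finset.mul_sum, hsum, mul_zero]
    · rw [smul_dotProduct, dotProduct_smul, smul_eq_mul, smul_eq_mul, ← mul_assoc, ← sq, hc2]
      exact inv_mul_cancel₀ hdot.ne'
    · rw [quad_smul_vec, hc2]
      show (x ⬝ᵥ x)⁻¹ * quad G g x = quad G g x / (x ⬝ᵥ x)
      rw [div_eq_mul_inv, mul_comm]
  · rintro ⟨x, hx, rfl⟩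
    exact ⟨x, KS_ne_zero hx, hx.1, by rw [hx.2, div_one]; rfl⟩

lemma lambda1_eq_sInf_image (g : G.edgeSet → ℝ) :
    lambda1 G g = sInf (quad G g '' KS V) := by
  rw [lambda1, lambda1_set_eq]


/-! ### The mean-zero subspace and the Rayleigh eigenvector argument -/

variable (V) in
/-- The subspace of mean-zero vectors in Euclidean space. -/
noncomputable def mz : Submodule ℝ (EuclideanSpace ℝ V) where
  carrier := {x | (∑ v, x v) = 0}
  add_mem' := by
    intro a b ha hb
    simp only [Set.mem_setOf_eq] at *
    show (∑ v, (a v + b v)) = 0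
    rw [Finset.sum_add_distrib, ha, hb, add_zero]
  zero_mem' := by
    show (∑ v : V, (0 : ℝ)) = 0
    simp
  smul_mem' := by
    intro c a ha
    simp only [Set.mem_setOf_eq] at *
    show (∑ v, c * a v) = 0
    rw [← Finset.mul_sum, ha, mul_zero]

lemma mem_mz_iff {x : EuclideanSpace ℝ V} : x ∈ mz V ↔ (∑ v, x v) = 0 := Iff.rfl

/-- The weighted Laplacian as a continuous linear map on Euclidean space. -/
noncomputable def lapCLM (g : G.edgeSet → ℝ) :
    EuclideanSpace ℝ V →L[ℝ] EuclideanSpace ℝ V :=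
  LinearMap.toContinuousLinearMap
    { toFun := fun x => WithLp.toLp 2 ((wLap G g) *ᵥ (x : V → ℝ))
      map_add' := fun x y => by simp [Matrix.mulVec_add]
      map_smul' := fun c x => by simp [Matrix.mulVec_smul] }

lemma lapCLM_apply (g : G.edgeSet → ℝ) (x : EuclideanSpace ℝ V) :
    lapCLM G g x = (wLap G g) *ᵥ x := rfl

lemma inner_eq_dot (x y : EuclideanSpace ℝ V) :
    (inner ℝ x y : ℝ) = (x : V → ℝ) ⬝ᵥ (y : V → ℝ) := by
  simp [PiLp.inner_apply, RCLike.inner_apply, dotProduct, mul_comm]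

lemma lap_mem_mz (g : G.edgeSet → ℝ) : ∀ x ∈ mz V, lapCLM G g x ∈ mz V := by
  intro x _
  rw [mem_mz_iff, lapCLM_apply]
  exact sum_mulVec_eq_zero G g x

/-- The weighted Laplacian restricted to the mean-zero subspace. -/
noncomputable def lapRes (g : G.edgeSet → ℝ) : mz V →L[ℝ] mz V :=
  LinearMap.toContinuousLinearMap
    (((lapCLM G g) : EuclideanSpace ℝ V →ₗ[ℝ] EuclideanSpace ℝ V).restrict (lap_mem_mz G g))

lemma lapRes_apply_coe (g : G.edgeSet → ℝ) (x : mz V) :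
    ((lapRes G g x : EuclideanSpace ℝ V) : V → ℝ) = (wLap G g) *ᵥ (x : EuclideanSpace ℝ V) := rfl

lemma lapRes_selfAdjoint (g : G.edgeSet → ℝ) : IsSelfAdjoint (lapRes G g) := by
  rw [ContinuousLinearMap.isSelfAdjoint_iff_isSymmetric]
  intro x y
  show (inner ℝ (lapRes G g x : EuclideanSpace ℝ V) (y : EuclideanSpace ℝ V) : ℝ) =
    inner ℝ (x : EuclideanSpace ℝ V) (lapRes G g y : EuclideanSpace ℝ V)
  rw [inner_eq_dot, inner_eq_dot, lapRes_apply_coe, lapRes_apply_coe]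
  rw [dotProduct_comm, dot_mulVec_comm]

lemma reApply_eq_quad (g : G.edgeSet → ℝ) (z : mz V) :
    (lapRes G g).reApplyInnerSelf z = quad G g (z : EuclideanSpace ℝ V) := by
  rw [ContinuousLinearMap.reApplyInnerSelf]
  show (inner ℝ (lapRes G g z : EuclideanSpace ℝ V) (z : EuclideanSpace ℝ V) : ℝ) = _
  rw [inner_eq_dot, lapRes_apply_coe, dotProduct_comm]
  rfl

lemma norm_sq_eq_dot (x : EuclideanSpace ℝ V) : ‖x‖ ^ 2 = (x : V → ℝ) ⬝ᵥ (x : V → ℝ) := by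
  rw [← real_inner_self_eq_norm_sq, inner_eq_dot]

/-- A minimizer of the quadratic form on `KS` is an eigenvector. -/
lemma minimizer_eigen (g : G.edgeSet → ℝ) (x : V → ℝ) (hx : x ∈ KS V)
    (hmin : ∀ y ∈ KS V, quad G g x ≤ quad G g y) :
    wLap G g *ᵥ x = (quad G g x) • x := by
  set xE : EuclideanSpace ℝ V := WithLp.toLp 2 x with hxE
  have hxmem : xE ∈ mz V := hx.1
  set xW : mz V := ⟨xE, hxmem⟩ with hxW
  have hnormE : ‖xE‖ = 1 := by
    have h1 : ‖xE‖ ^ 2 = 1 := by rw [norm_sq_eq_dot]; exact hx.2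
    have h2 : (0:ℝ) ≤ ‖xE‖ := norm_nonneg _
    calc ‖xE‖ = Real.sqrt (‖xE‖ ^ 2) := (Real.sqrt_sq h2).symm
      _ = 1 := by rw [h1, Real.sqrt_one]
  have hnorm : ‖xW‖ = 1 := hnormE
  have hx0 : xW ≠ 0 := by
    intro h
    rw [h, norm_zero] at hnorm
    norm_num at hnorm
  have hextr : IsMinOn (lapRes G g).reApplyInnerSelf (Metric.sphere (0 : mz V) ‖xW‖) xW := by
    rw [isMinOn_iff]
    intro y hy
    have hynorm : ‖y‖ = 1 := by
      rw [hnorm] at hy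
      simpa [mem_sphere_iff_norm] using hy
    have hyK : ((y : EuclideanSpace ℝ V) : V → ℝ) ∈ KS V := by
      refine ⟨y.2, ?_⟩
      have := norm_sq_eq_dot (y : EuclideanSpace ℝ V)
      rw [← this, Submodule.norm_coe, hynorm, one_pow]
    rw [reApply_eq_quad, reApply_eq_quad]
    exact hmin _ hyK
  have heig := (lapRes_selfAdjoint G g).eq_smul_self_of_isLocalExtrOn_real
    (Or.inl hextr.localize)
  have hray : (lapRes G g).rayleighQuotient xW = quad G g x := by
    rw [ContinuousLinearMap.rayleighQuotient, reApply_eq_quad, hnorm, one_pow, div_one]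
  rw [hray] at heig
  have := congrArg (fun z : mz V => ((z : EuclideanSpace ℝ V) : V → ℝ)) heig
  simpa [lapRes_apply_coe] using this

/-! ### `lambda1` as an attained minimum -/

lemma exists_min (g : G.edgeSet → ℝ) (hne : (KS V).Nonempty) :
    ∃ x ∈ KS V, ∀ y ∈ KS V, quad G g x ≤ quad G g y := by
  obtain ⟨x, hxK, hmin⟩ := isCompact_KS.exists_isMinOn hne (continuous_quad G g).continuousOn
  exact ⟨x, hxK, fun y hy => (isMinOn_iff.mp hmin) y hy⟩

lemma lambda1_eq_of_min (g : G.edgeSet → ℝ) {x : V → ℝ} (hx : x ∈ KS V)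
    (hmin : ∀ y ∈ KS V, quad G g x ≤ quad G g y) : lambda1 G g = quad G g x := by
  rw [lambda1_eq_sInf_image]
  refine IsLeast.csInf_eq ⟨⟨x, hx, rfl⟩, ?_⟩
  rintro r ⟨y, hy, rfl⟩
  exact hmin y hy

lemma lambda1_le_quotient (g : G.edgeSet → ℝ) {x : V → ℝ} (hx0 : x ≠ 0)
    (hsum : (∑ v, x v) = 0) : lambda1 G g ≤ quad G g x / (x ⬝ᵥ x) := by
  rw [lambda1]
  refine csInf_le ?_ ⟨x, hx0, hsum, rfl⟩
  rw [lambda1_set_eq]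
  exact (isCompact_KS.image (continuous_quad G g)).bddBelow

lemma dvec_self (a b : V) (hab : a ≠ b) : dvec a b a = 1 ∧ dvec a b b = -1 := by
  constructor <;> simp [dvec, Pi.single_apply, hab, hab.symm]

lemma KS_nonempty [Nontrivial V] : (KS V).Nonempty := by
  obtain ⟨a, b, hab⟩ := exists_pair_ne V
  refine ⟨(Real.sqrt 2)⁻¹ • dvec a b, ?_, ?_⟩
  · show (∑ v, (Real.sqrt 2)⁻¹ * dvec a b v) = 0
    rw [← Finset.mul_sum, dvec_sum, mul_zero]
  · rw [smul_dotProduct, dotProduct_smul, smul_eq_mul, smul_eq_mul, ← mul_assoc]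
    have hdot : dvec a b ⬝ᵥ dvec a b = 2 := by
      rw [dvec_dot, (dvec_self a b hab).1, (dvec_self a b hab).2]
      norm_num
    rw [hdot, ← mul_inv, Real.mul_self_sqrt (by norm_num : (0:ℝ) ≤ 2)]
    norm_num

/-! ### Properties of the eigenspace -/

lemma lambda1_pos [Nontrivial V] (hG : G.Connected) {f : G.edgeSet → ℝ}
    (hpos : ∀ e, 0 < f e) : 0 < lambda1 G f := by
  obtain ⟨x, hxK, hmin⟩ := exists_min G f KS_nonempty
  rw [lambda1_eq_of_min G f hxK hmin]
  exact quad_pos G hG hpos hxK.1 (KS_ne_zero hxK)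

lemma eig_sum_zero [Nontrivial V] (hG : G.Connected) {f : G.edgeSet → ℝ}
    (hpos : ∀ e, 0 < f e) {x : V → ℝ} (hx : x ∈ EigOne G f) : (∑ v, x v) = 0 := by
  have h1 : (∑ v, (wLap G f *ᵥ x) v) = 0 := sum_mulVec_eq_zero G f x
  rw [hx] at h1
  have h2 : (∑ v, (lambda1 G f • x) v) = lambda1 G f * ∑ v, x v := by
    simp [Finset.mul_sum]
  rw [h2] at h1
  rcases mul_eq_zero.mp h1 with h | h
  · exact absurd h (lambda1_pos G hG hpos).ne'
  · exact h

lemma eig_quad {f : G.edgeSet → ℝ} {x : V → ℝ} (hx : x ∈ EigOne G f) :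
    quad G f x = lambda1 G f * (x ⬝ᵥ x) := by
  rw [quad, hx, dotProduct_smul, smul_eq_mul]


/-! ### The key perturbation lemma -/

lemma not_posdef_of_max [Nontrivial V] (hG : G.Connected)
    (S : AffineSubspace ℝ (G.edgeSet → ℝ)) {f : G.edgeSet → ℝ}
    (hfS : f ∈ S) (hpos : ∀ e, 0 < f e)
    (hmax : ∀ g ∈ (S : Set (G.edgeSet → ℝ)), lambda1 G g ≤ lambda1 G f)
    {Q : G.edgeSet → ℝ} (hQ : Q ∈ S.direction) :
    ¬ (∀ x ∈ EigOne G f, x ≠ 0 → 0 < quad G Q x) := by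
  intro hPD
  obtain ⟨x₀, hx₀K, hmin₀⟩ := exists_min G f KS_nonempty
  have hl1 : lambda1 G f = quad G f x₀ := lambda1_eq_of_min G f hx₀K hmin₀
  have hlb : ∀ y ∈ KS V, lambda1 G f ≤ quad G f y := by
    intro y hy; rw [hl1]; exact hmin₀ y hy
  -- a bound for the perturbation form on `KS`
  obtain ⟨M₀, hM₀⟩ := isCompact_KS.exists_bound_of_continuousOn (continuous_quad G Q).continuousOn
  set M : ℝ := max M₀ 1 with hM
  have hMpos : (0:ℝ) < M := lt_of_lt_of_le one_pos (le_max_right _ _)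
  have hMb : ∀ y ∈ KS V, |quad G Q y| ≤ M := by
    intro y hy
    calc |quad G Q y| = ‖quad G Q y‖ := rfl
      _ ≤ M₀ := hM₀ y hy
      _ ≤ M := le_max_left _ _
  -- find a positive step size
  have key : ∃ t : ℝ, 0 < t ∧ ∀ y ∈ KS V, lambda1 G f < quad G f y + t * quad G Q y := by
    set C : Set (V → ℝ) := KS V ∩ {y | quad G Q y ≤ 0} with hC
    by_cases hCne : C.Nonempty
    · have hCc : IsCompact C :=
        isCompact_KS.inter_right (isClosed_le (continuous_quad G Q) continuous_const)
      obtain ⟨z, hzC, hzmin⟩ := hCc.exists_isMinOn hCne (continuous_quad G f).continuousOn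
      have hzK : z ∈ KS V := hzC.1
      have hzgt : lambda1 G f < quad G f z := by
        rcases (hlb z hzK).lt_or_eq with h | h
        · exact h
        · exfalso
          have hzminK : ∀ y ∈ KS V, quad G f z ≤ quad G f y := by
            intro y hy; rw [← h]; exact hlb y hy
          have heig := minimizer_eigen G f z hzK hzminK
          have hzE : z ∈ EigOne G f := by
            show wLap G f *ᵥ z = lambda1 G f • z
            rw [heig, ← h]
          have := hPD z hzE (KS_ne_zero hzK)
          exact absurd hzC.2 (not_le.mpr this)
      set δ : ℝ := quad G f z - lambda1 G f with hδ
      have hδpos : 0 < δ := sub_pos.mpr hzgt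
      refine ⟨δ / (2 * M), by positivity, ?_⟩
      intro y hy
      by_cases hyC : quad G Q y ≤ 0
      · have hyz : quad G f z ≤ quad G f y := (isMinOn_iff.mp hzmin) y ⟨hy, hyC⟩
        have habs := hMb y hy
        have h1 : -M ≤ quad G Q y := by
          rcases abs_le.mp habs with ⟨h, _⟩; exact h
        have h2 : δ / (2 * M) * quad G Q y ≥ δ / (2 * M) * (-M) :=
          mul_le_mul_of_nonneg_left h1 (by positivity)
        have h3 : δ / (2 * M) * (-M) = -(δ / 2) := by field_simp
        have h4 : lambda1 G f + δ ≤ quad G f y := by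
          rw [hδ] at *; linarith
        linarith
      · push_neg at hyC
        have := hlb y hy
        have hpos' : 0 < δ / (2 * M) * quad G Q y := by positivity
        linarith
    · refine ⟨1, one_pos, ?_⟩
      intro y hy
      have hyQ : 0 < quad G Q y := by
        by_contra h
        exact hCne ⟨y, hy, not_lt.mp h⟩
      have := hlb y hy
      linarith
  obtain ⟨t, ht, hkey⟩ := key
  -- the perturbed valuation
  set g : G.edgeSet → ℝ := f + t • Q with hg
  have hgS : g ∈ S := by
    have h1 : t • Q ∈ S.direction := S.direction.smul_mem t hQ
    have h2 := AffineSubspace.vadd_mem_of_mem_direction h1 hfS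
    have h3 : (t • Q) +ᵥ f = f + t • Q := by
      show t • Q + f = f + t • Q
      exact add_comm _ _
    rwa [h3] at h2
  obtain ⟨y, hyK, hymin⟩ := exists_min G g KS_nonempty
  have hval : lambda1 G g = quad G f y + t * quad G Q y := by
    rw [lambda1_eq_of_min G g hyK hymin, hg, quad_add, quad_smul]
  have hgt : lambda1 G f < lambda1 G g := by
    rw [hval]; exact hkey y hyK
  exact absurd (hmax g hgS) (not_le.mpr hgt)


/-- Let `S` be an affine subspace of edge valuations containing a
valuation `f` with all weights positive. Then `f` maximizes `λ₁` over `S` iff for every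
nonzero tangent variation `Q` of `S`, the quadratic form of the induced Laplacian
variation `Q_Δ = ∑_e Q(e) • Q_e`, restricted to the eigenspace `E_{λ₁}`, is indefinite
(neither positive definite nor negative definite on `E_{λ₁}`). -/
theorem lambda1_max_iff_indefinite (hG : G.Connected)
    (S : AffineSubspace ℝ (G.edgeSet → ℝ)) (f : G.edgeSet → ℝ)
    (hfS : f ∈ S) (hpos : ∀ e, 0 < f e) :
    (∀ g ∈ (S : Set (G.edgeSet → ℝ)), lambda1 G g ≤ lambda1 G f) ↔
      ∀ Q ∈ S.direction, Q ≠ 0 →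
        ¬ (∀ x ∈ EigOne G f, x ≠ 0 → 0 < x ⬝ᵥ (wLap G Q) *ᵥ x) ∧
        ¬ (∀ x ∈ EigOne G f, x ≠ 0 → x ⬝ᵥ (wLap G Q) *ᵥ x < 0) := by
  rcases subsingleton_or_nontrivial V with hsub | hnt
  · -- trivial case: at most one vertex, no edges, `lambda1` is identically `0`
    have hempty : IsEmpty G.edgeSet := by
      refine ⟨fun e => ?_⟩
      obtain ⟨a, b, hab, _⟩ := edge_rep G e
      exact hab.ne (Subsingleton.elim a b)
    have hzero : ∀ g : G.edgeSet → ℝ, lambda1 G g = 0 := by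
      intro g
      rw [lambda1]
      have hset : {r | ∃ x : V → ℝ, x ≠ 0 ∧ (∑ v, x v) = 0 ∧
          r = (x ⬝ᵥ (wLap G g) *ᵥ x) / (x ⬝ᵥ x)} = (∅ : Set ℝ) := by
        refine Set.eq_empty_iff_forall_notMem.mpr ?_
        rintro r ⟨x, hx0, hsum, _⟩
        apply hx0
        funext v
        have h1 : (∑ w, x w) = x v :=
          Fintype.sum_eq_single v fun w hw => absurd (Subsingleton.elim w v) hw
        rw [h1] at hsum
        exact hsum
      rw [hset, Real.sInf_empty]
    constructor
    · intro _ Q _ hQne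
      exact absurd (funext fun e => hempty.elim e) hQne
    · intro _ g _
      rw [hzero g, hzero f]
  · constructor
    · intro hmax Q hQ _
      constructor
      · exact not_posdef_of_max G hG S hfS hpos hmax hQ
      · intro hND
        refine not_posdef_of_max G hG S hfS hpos hmax (S.direction.neg_mem hQ) ?_
        intro x hx hxne
        have h1 := hND x hx hxne
        have h2 : quad G (-Q) x = -quad G Q x := quad_neg G Q x
        show 0 < quad G (-Q) x
        rw [h2]
        exact neg_pos.mpr h1
    · intro hRHS g hgS
      by_contra hlt
      push_neg at hlt
      set Q : G.edgeSet → ℝ := g - f with hQdef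
      have hQdir : Q ∈ S.direction := by
        have := AffineSubspace.vsub_mem_direction hgS hfS
        exact this
      have hQne : Q ≠ 0 := by
        rw [hQdef]
        intro h
        rw [sub_eq_zero] at h
        rw [h] at hlt
        exact lt_irrefl _ hlt
      refine (hRHS Q hQdir hQne).1 ?_
      intro x hx hxne
      have hsum : (∑ v, x v) = 0 := eig_sum_zero G hG hpos hx
      have hd : 0 < x ⬝ᵥ x := dot_self_pos hxne
      have hquot : lambda1 G g ≤ quad G g x / (x ⬝ᵥ x) := lambda1_le_quotient G g hxne hsum
      have hgfQ : quad G g x = quad G f x + quad G Q x := by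
        have : g = f + Q := by rw [hQdef]; ring
        rw [this, quad_add]
      have hfq : quad G f x = lambda1 G f * (x ⬝ᵥ x) := eig_quad G hx
      have h1 : lambda1 G f < quad G g x / (x ⬝ᵥ x) := lt_of_lt_of_le hlt hquot
      have h2 : lambda1 G f * (x ⬝ᵥ x) < quad G g x := by
        rwa [lt_div_iff₀ hd] at h1
      show 0 < quad G Q x
      rw [hgfQ, hfq] at h2
      linarith

end ExtremalGraphs
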